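/- Let q be a non-real quaternion with trace t(q) = q + conj(q) and norm nu(q) = |q|. Then the set of quaternion roots of the real quadratic polynomial P_q(x) = x^2 - t(q)x + nu(q)^2 is exactly the congruency class [q] of q. -/

import Mathlib

open Quaternion

private lemma conj_of_mul (x q w : ℍ[ℝ]) (hw : w ≠ 0) (h : x * w = w * q) :
    x = w * q * w⁻¹ := by
  rw [← h, mul_assoc, mul_inv_cancel₀ hw, mul_one]

private def qmk (a b c d : ℝ) : ℍ[ℝ] := ⟨a, b, c, d⟩

@[simp] private lemma qmk_re (a b c d : ℝ) : (qmk a b c d).re = a := rfl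
@[simp] private lemma qmk_imI (a b c d : ℝ) : (qmk a b c d).imI = b := rfl
@[simp] private lemma qmk_imJ (a b c d : ℝ) : (qmk a b c d).imJ = c := rfl
@[simp] private lemma qmk_imK (a b c d : ℝ) : (qmk a b c d).imK = d := rfl

theorem roots_char_poly_eq_congruency_class (q : ℍ[ℝ])
    (hq : ¬ (q.imI = 0 ∧ q.imJ = 0 ∧ q.imK = 0)) :
    {x : ℍ[ℝ] | x ^ 2 - (q + star q) * x + ((‖q‖ ^ 2 : ℝ) : ℍ[ℝ]) = 0} =
      {x : ℍ[ℝ] | ∃ w : ℍ[ℝ], w ≠ 0 ∧ x = w * q * w⁻¹} := by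
  have hn : ((‖q‖ ^ 2 : ℝ) : ℍ[ℝ]) = star q * q := by
    rw [Quaternion.star_mul_self, sq, Quaternion.normSq_eq_norm_mul_self]
  have hcomm : ∀ y : ℍ[ℝ], (q + star q) * y = y * (q + star q) := by
    intro y
    rw [Quaternion.self_add_star', Quaternion.coe_commutes]
  ext x
  simp only [Set.mem_setOf_eq]
  constructor
  · intro hx
    rw [hn] at hx
    by_cases hws : x = star q
    · subst hws
      by_cases hij : q.imI = 0 ∧ q.imJ = 0
      · obtain ⟨h1, h2⟩ := hij
        have hwne : (qmk 0 1 0 0 : ℍ[ℝ]) ≠ 0 := by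
          intro h
          have := congrArg QuaternionAlgebra.imI h
          simp [Quaternion.ext_iff] at this
        refine ⟨qmk 0 1 0 0, hwne, conj_of_mul _ _ _ hwne ?_⟩
        ext <;>
          simp [Quaternion.re_mul, Quaternion.imI_mul, Quaternion.imJ_mul,
            Quaternion.imK_mul, h1, h2] <;> ring
      · have hwne : (qmk 0 (-q.imJ) q.imI 0 : ℍ[ℝ]) ≠ 0 := by
          intro h
          rw [Quaternion.ext_iff] at h
          simp at h
          exact hij ⟨h.2, h.1⟩
        refine ⟨qmk 0 (-q.imJ) q.imI 0, hwne, conj_of_mul _ _ _ hwne ?_⟩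
        ext <;>
          simp [Quaternion.re_mul, Quaternion.imI_mul, Quaternion.imJ_mul,
            Quaternion.imK_mul] <;> ring
    · refine ⟨x - star q, sub_ne_zero.mpr hws, ?_⟩
      refine conj_of_mul _ _ _ (sub_ne_zero.mpr hws) ?_
      have hc : (q + star q) * x = x * q + x * star q := by
        rw [hcomm x, mul_add]
      have hx2 : x ^ 2 = (q + star q) * x - star q * q := by
        have h0 : x ^ 2 - ((q + star q) * x - star q * q) = 0 := by
          rw [← hx]; noncomm_ring
        exact sub_eq_zero.mp h0
      calc x * (x - star q) = x ^ 2 - x * star q := by noncomm_ring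
        _ = (q + star q) * x - star q * q - x * star q := by rw [hx2]
        _ = x * q + x * star q - star q * q - x * star q := by rw [hc]
        _ = (x - star q) * q := by noncomm_ring
  · rintro ⟨w, hw, rfl⟩
    have hxw : w * q * w⁻¹ * w = w * q := by
      rw [mul_assoc, inv_mul_cancel₀ hw, mul_one]
    set x := w * q * w⁻¹ with hxdef
    have hc1 : (q + star q) * w = w * (q + star q) := hcomm w
    have hc2 : ((‖q‖ ^ 2 : ℝ) : ℍ[ℝ]) * w = w * ((‖q‖ ^ 2 : ℝ) : ℍ[ℝ]) :=
      Quaternion.coe_commutes _ _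
    have h2 : (x ^ 2 - (q + star q) * x + ((‖q‖ ^ 2 : ℝ) : ℍ[ℝ])) * w =
        w * (q ^ 2 - (q + star q) * q + ((‖q‖ ^ 2 : ℝ) : ℍ[ℝ])) := by
      calc (x ^ 2 - (q + star q) * x + ((‖q‖ ^ 2 : ℝ) : ℍ[ℝ])) * w
          = x * (x * w) - (q + star q) * (x * w) + ((‖q‖ ^ 2 : ℝ) : ℍ[ℝ]) * w := by
            noncomm_ring
        _ = x * (w * q) - (q + star q) * (w * q) + w * ((‖q‖ ^ 2 : ℝ) : ℍ[ℝ]) := by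
            rw [hxw, hc2]
        _ = (x * w) * q - ((q + star q) * w) * q + w * ((‖q‖ ^ 2 : ℝ) : ℍ[ℝ]) := by
            noncomm_ring
        _ = (w * q) * q - (w * (q + star q)) * q + w * ((‖q‖ ^ 2 : ℝ) : ℍ[ℝ]) := by
            rw [hxw, hc1]
        _ = w * (q ^ 2 - (q + star q) * q + ((‖q‖ ^ 2 : ℝ) : ℍ[ℝ])) := by
            noncomm_ring
    have hinner : q ^ 2 - (q + star q) * q + ((‖q‖ ^ 2 : ℝ) : ℍ[ℝ]) = 0 := by
      rw [hn]; noncomm_ring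
    rw [hinner, mul_zero] at h2
    rcases mul_eq_zero.mp h2 with h | h
    · exact h
    · exact absurd h hw
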